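/- arXiv:2101.01072 — 7 statements merged into one kernel-verified Lean document; each statement's English description precedes it below -/
import Mathlib

section
/- Let P (trip nodes) and Ω (routes) be finite sets, let a : Ω → P → ℝ satisfy a ρ i ≥ 0 for all ρ and i, let μ : P → ℝ satisfy μ i ≥ 0 for all i, and let c̄ be a real number with c̄ < 1 such that for every route ρ ∈ Ω one has 1 - ∑_{i ∈ P} a ρ i * μ i ≥ c̄ (i.e., c̄ is a lower bound on all route reduced costs). Then for every x : Ω → ℝ with x ρ ≥ 0 for all ρ and ∑_{ρ ∈ Ω} a ρ i * x ρ ≥ 1 for every i ∈ P (i.e., x is feasible for the set-covering linear program), the objective value satisfies ∑_{ρ ∈ Ω} x ρ ≥ (∑_{i ∈ P} μ i) / (1 - c̄). -/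
/-- Farley lower bound: if `cbar < 1` is a lower bound on all route reduced costs
`1 - ∑ i, a ρ i * μ i` for nonnegative duals `μ`, then every feasible solution `x`
of the set-covering LP has objective value at least `(∑ i, μ i) / (1 - cbar)`. -/
theorem farley_lower_bound {ι κ : Type*} (P : Finset ι) (Ω : Finset κ)
    (a : κ → ι → ℝ) (μ : ι → ℝ) (cbar : ℝ)
    (ha : ∀ ρ i, 0 ≤ a ρ i) (hμ : ∀ i, 0 ≤ μ i) (hc : cbar < 1)
    (hred : ∀ ρ ∈ Ω, cbar ≤ 1 - ∑ i ∈ P, a ρ i * μ i)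
    (x : κ → ℝ) (hx : ∀ ρ, 0 ≤ x ρ)
    (hcov : ∀ i ∈ P, 1 ≤ ∑ ρ ∈ Ω, a ρ i * x ρ) :
    (∑ i ∈ P, μ i) / (1 - cbar) ≤ ∑ ρ ∈ Ω, x ρ := by
  have hpos : (0:ℝ) < 1 - cbar := by linarith
  rw [div_le_iff₀ hpos]
  have h1 : ∑ i ∈ P, μ i ≤ ∑ i ∈ P, μ i * ∑ ρ ∈ Ω, a ρ i * x ρ := by
    apply Finset.sum_le_sum
    intro i hi
    nth_rewrite 1 [← mul_one (μ i)]
    exact mul_le_mul_of_nonneg_left (hcov i hi) (hμ i)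
  have h2 : ∑ i ∈ P, μ i * ∑ ρ ∈ Ω, a ρ i * x ρ
      = ∑ ρ ∈ Ω, x ρ * ∑ i ∈ P, a ρ i * μ i := by
    simp_rw [Finset.mul_sum]
    rw [Finset.sum_comm]
    apply Finset.sum_congr rfl
    intro ρ _
    apply Finset.sum_congr rfl
    intro i _
    ring
  have h3 : ∑ ρ ∈ Ω, x ρ * ∑ i ∈ P, a ρ i * μ i ≤ ∑ ρ ∈ Ω, x ρ * (1 - cbar) := by
    apply Finset.sum_le_sum
    intro ρ hρ
    exact mul_le_mul_of_nonneg_left (by linarith [hred ρ hρ]) (hx ρ)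
  calc ∑ i ∈ P, μ i ≤ ∑ ρ ∈ Ω, x ρ * (1 - cbar) := by
        rw [← h2] at h3; linarith
    _ = (∑ ρ ∈ Ω, x ρ) * (1 - cbar) := by rw [Finset.sum_mul]
end

section
/- Let a_i, b_i, a_j, b_j, s_i, τ_ij be real numbers, let T_i, T_j be reals with a_i ≤ T_i ≤ b_i and a_j ≤ T_j ≤ b_j, and let Y_ij, Y_ji ∈ {0, 1} with Y_ij + Y_ji ≤ 1. Define M = max(0, b_i + s_i + τ_ij - a_j) and α = M - s_i - τ_ij - b_i + a_j. If Y_ij = 1 implies T_i + s_i + τ_ij ≤ T_j, then the lifted Miller–Tucker–Zemlin inequality T_i + s_i + τ_ij ≤ T_j + M·(1 - Y_ij) - α·Y_ji holds. -/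
/-- Validity of the lifted MTZ inequality when node `i` is a pickup node, with
lifting coefficient `α = M - s_i - τ_ij - b_i + a_j`. -/
theorem lifted_MTZ_pickup (a_i b_i a_j b_j s_i τ_ij T_i T_j Y_ij Y_ji : ℝ)
    (hTi1 : a_i ≤ T_i) (hTi2 : T_i ≤ b_i) (hTj1 : a_j ≤ T_j) (hTj2 : T_j ≤ b_j)
    (hYij : Y_ij = 0 ∨ Y_ij = 1) (hYji : Y_ji = 0 ∨ Y_ji = 1)
    (hsum : Y_ij + Y_ji ≤ 1)
    (himp : Y_ij = 1 → T_i + s_i + τ_ij ≤ T_j) :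
    T_i + s_i + τ_ij ≤
      T_j + (max 0 (b_i + s_i + τ_ij - a_j)) * (1 - Y_ij)
        - (max 0 (b_i + s_i + τ_ij - a_j) - s_i - τ_ij - b_i + a_j) * Y_ji := by


  rcases hYij with h | h <;> rcases hYji with h' | h' <;>
    subst h <;> subst h' <;> simp_all <;>
    nlinarith [le_max_left 0 (b_i + s_i + τ_ij - a_j), le_max_right 0 (b_i + s_i + τ_ij - a_j)]
end

section
/- Let a_i, b_i, a_j, b_j, s_i, s_j, τ_ij, τ_ji be real numbers, let T_i, T_j be reals with a_i ≤ T_i ≤ b_i and a_j ≤ T_j ≤ b_j, and let Y_ij, Y_ji ∈ {0, 1} with Y_ij + Y_ji ≤ 1. Define M = max(0, b_i + s_i + τ_ij - a_j) and α = M - s_i - τ_ij - s_j - τ_ji. If Y_ij = 1 implies T_i + s_i + τ_ij ≤ T_j, and Y_ji = 1 implies T_j + s_j + τ_ji = T_i, then the lifted Miller–Tucker–Zemlin inequality T_i + s_i + τ_ij ≤ T_j + M·(1 - Y_ij) - α·Y_ji holds. -/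
/-- Validity of the lifted MTZ inequality when node `i` is a drop-off node, with
lifting coefficient `α = M - s_i - τ_ij - s_j - τ_ji`. -/
theorem lifted_MTZ_dropoff (a_i b_i a_j b_j s_i s_j τ_ij τ_ji T_i T_j Y_ij Y_ji : ℝ)
    (hTi1 : a_i ≤ T_i) (hTi2 : T_i ≤ b_i) (hTj1 : a_j ≤ T_j) (hTj2 : T_j ≤ b_j)
    (hYij : Y_ij = 0 ∨ Y_ij = 1) (hYji : Y_ji = 0 ∨ Y_ji = 1)
    (hsum : Y_ij + Y_ji ≤ 1)
    (himp : Y_ij = 1 → T_i + s_i + τ_ij ≤ T_j)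
    (himp' : Y_ji = 1 → T_j + s_j + τ_ji = T_i) :
    T_i + s_i + τ_ij ≤
      T_j + (max 0 (b_i + s_i + τ_ij - a_j)) * (1 - Y_ij)
        - (max 0 (b_i + s_i + τ_ij - a_j) - s_i - τ_ij - s_j - τ_ji) * Y_ji := by
  have hM : b_i + s_i + τ_ij - a_j ≤ max 0 (b_i + s_i + τ_ij - a_j) := le_max_right _ _
  rcases hYij with h1 | h1 <;> rcases hYji with h2 | h2 <;> simp_all <;>
    linarith [le_max_right (0:ℝ) (b_i + s_i + τ_ij - a_j)]
end

section
/- Let a_i, b_i, a_j, b_j, s_i, s_j, τ_ij, τ_ji be real numbers, let T_i, T_j be reals with a_i ≤ T_i ≤ b_i and a_j ≤ T_j ≤ b_j, and let Y_ij, Y_ji ∈ {0, 1} with Y_ij + Y_ji ≤ 1. Define M̄ = max(0, b_j - a_i - s_i - τ_ij) and β = -M̄ - s_i - τ_ij - s_j - τ_ji. If Y_ij = 1 implies T_i + s_i + τ_ij ≥ T_j, and Y_ji = 1 implies T_j + s_j + τ_ji ≤ T_i, then the lifted inequality T_i + s_i + τ_ij ≥ T_j - M̄·(1 - Y_ij)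 - β·Y_ji holds. -/
/-- Validity of the lifted lower-bounding MTZ inequality, with lifting coefficient
`β = -M̄ - s_i - τ_ij - s_j - τ_ji`. -/
theorem lifted_MTZ_lower (a_i b_i a_j b_j s_i s_j τ_ij τ_ji T_i T_j Y_ij Y_ji : ℝ)
    (hTi1 : a_i ≤ T_i) (hTi2 : T_i ≤ b_i) (hTj1 : a_j ≤ T_j) (hTj2 : T_j ≤ b_j)
    (hYij : Y_ij = 0 ∨ Y_ij = 1) (hYji : Y_ji = 0 ∨ Y_ji = 1)
    (hsum : Y_ij + Y_ji ≤ 1)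
    (himp : Y_ij = 1 → T_i + s_i + τ_ij ≥ T_j)
    (himp' : Y_ji = 1 → T_j + s_j + τ_ji ≤ T_i) :
    T_i + s_i + τ_ij ≥
      T_j - (max 0 (b_j - a_i - s_i - τ_ij)) * (1 - Y_ij)
        - (-(max 0 (b_j - a_i - s_i - τ_ij)) - s_i - τ_ij - s_j - τ_ji) * Y_ji := by
  have h1 : (0:ℝ) ≤ max 0 (b_j - a_i - s_i - τ_ij) := le_max_left _ _
  have h2 : b_j - a_i - s_i - τ_ij ≤ max 0 (b_j - a_i - s_i - τ_ij) := le_max_right _ _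
  rcases hYij with h|h <;> rcases hYji with h'|h' <;>
    simp only [h, h'] at * <;> [skip; skip; skip; linarith] <;>
    first
    | (have := himp' trivial; linarith)
    | (have := himp trivial; linarith)
    | linarith
end

section
/- Let i be a node with time-window lower bound a_i and start-of-service time T_i ≥ a_i. Let J be a finite set of potential predecessor nodes, where each j ∈ J has time-window lower bound a_j, start-of-service time T_j ≥ a_j, service duration s_j, and travel time τ_ji to node i. Let Y : J → {0, 1} satisfy ∑_{j ∈ J} Y_j ≤ 1, and suppose that Y_j = 1 implies T_j + s_j + τ_ji ≤ T_i. Then T_i ≥ a_i + ∑_{j ∈ J} max(0, a_j - a_i + s_j + τ_ji) · Y_j. -/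
/-- Validity of the lifted time-bound inequality strengthening the lower
time-window bound of node `i` using its incoming edges. -/
theorem lifted_time_lower_bound {ι : Type*} (J : Finset ι) (a_i T_i : ℝ)
    (hTi : a_i ≤ T_i)
    (a T s τ : ι → ℝ)
    (hT : ∀ j ∈ J, a j ≤ T j)
    (Y : ι → ℝ) (hY : ∀ j ∈ J, Y j = 0 ∨ Y j = 1)
    (hsum : ∑ j ∈ J, Y j ≤ 1)
    (himp : ∀ j ∈ J, Y j = 1 → T j + s j + τ j ≤ T_i) :
    a_i + ∑ j ∈ J, max 0 (a j - a_i + s j + τ j) * Y j ≤ T_i := by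
  have key : ∑ j ∈ J, max 0 (a j - a_i + s j + τ j) * Y j
      ≤ ∑ j ∈ J, (T_i - a_i) * Y j := by
    apply Finset.sum_le_sum
    intro j hj
    rcases hY j hj with h0 | h1
    · simp [h0]
    · rw [h1, mul_one, mul_one]
      have h2 := himp j hj h1
      have h3 := hT j hj
      exact max_le (by linarith) (by linarith)
  have h4 : ∑ j ∈ J, (T_i - a_i) * Y j = (T_i - a_i) * ∑ j ∈ J, Y j := by
    rw [Finset.mul_sum]
  have h5 : (T_i - a_i) * ∑ j ∈ J, Y j ≤ (T_i - a_i) * 1 :=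
    mul_le_mul_of_nonneg_left hsum (by linarith)
  linarith
end

section
/- Let i be a node with time-window upper bound b_i, service duration s_i, and start-of-service time T_i ≤ b_i. Let J be a finite set of potential successor nodes, where each j ∈ J has time-window upper bound b_j, start-of-service time T_j ≤ b_j, and travel time τ_ij from node i. Let Y : J → {0, 1} satisfy ∑_{j ∈ J} Y_j ≤ 1, and suppose that Y_j = 1 implies T_i + s_i + τ_ij ≤ T_j. Then T_i ≤ b_i - ∑_{j ∈ J} max(0, b_i - b_j + s_i + τ_ij) · Y_j. -/
/-- Validity of the lifted time-bound inequality strengthening the upper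
time-window bound of node `i` using its outgoing edges. -/
theorem lifted_time_upper_bound {ι : Type*} (J : Finset ι) (b_i s_i T_i : ℝ)
    (hTi : T_i ≤ b_i)
    (b T τ : ι → ℝ)
    (hT : ∀ j ∈ J, T j ≤ b j)
    (Y : ι → ℝ) (hY : ∀ j ∈ J, Y j = 0 ∨ Y j = 1)
    (hsum : ∑ j ∈ J, Y j ≤ 1)
    (himp : ∀ j ∈ J, Y j = 1 → T_i + s_i + τ j ≤ T j) :
    T_i ≤ b_i - ∑ j ∈ J, max 0 (b_i - b j + s_i + τ j) * Y j := by
  have key : ∑ j ∈ J, max 0 (b_i - b j + s_i + τ j) * Y j ≤ (b_i - T_i) * ∑ j ∈ J, Y j := by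
    rw [Finset.mul_sum]
    apply Finset.sum_le_sum
    intro j hj
    rcases hY j hj with h0 | h1
    · simp [h0]
    · rw [h1, mul_one, mul_one]
      exact max_le (by linarith) (by have := himp j hj h1; have := hT j hj; linarith)
  have h2 : (b_i - T_i) * ∑ j ∈ J, Y j ≤ (b_i - T_i) * 1 :=
    mul_le_mul_of_nonneg_left hsum (by linarith)
  linarith
end

section
/- Let G be a directed graph with vertex set V containing distinguished vertices v_s and v_t with v_s ≠ v_t, let P ⊆ V be a set of pickup nodes with v_s ∉ P and v_t ∉ P, and let μ : P → ℝ. Define arc costs by c̄(u, w) = 1 if u = v_s, c̄(u, w) = -μ(u) if u ∈ P, and c̄(u, w) = 0 otherwise. Then for every directed walk ρ from v_s to v_t in which v_s occurs only as the first vertex and v_t occurs only as the last vertex, the total arc cost of ρ equals 1 - ∑_{i ∈ P} n_i(ρ) · μ(i), where n_i(ρ) denotes the number of occurrences of vertex i in ρ. -/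
/-- With reduced arc costs `1` on arcs leaving the source, `-μ u` on arcs leaving a
pickup node `u ∈ P`, and `0` otherwise, the total arc cost of any directed walk from
`v_s` to `v_t` (in which `v_s` occurs only first and `v_t` only last) equals the
reduced cost `1 - ∑ i ∈ P, n_i(ρ) * μ i`, where `n_i(ρ)` counts occurrences of `i`. -/
theorem reduced_cost_of_walk {V : Type*} [DecidableEq V] (G : V → V → Prop)
    (vs vt : V) (hst : vs ≠ vt) (P : Finset V) (hsP : vs ∉ P) (htP : vt ∉ P)
    (μ : V → ℝ) (m : ℕ) (w : Fin (m + 1) → V)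
    (h0 : w 0 = vs) (hm : w (Fin.last m) = vt)
    (hadj : ∀ k : Fin m, G (w k.castSucc) (w k.succ))
    (hsonce : ∀ k : Fin (m + 1), w k = vs → k = 0)
    (htonce : ∀ k : Fin (m + 1), w k = vt → k = Fin.last m) :
    (∑ k : Fin m, (if w k.castSucc = vs then (1 : ℝ)
        else if w k.castSucc ∈ P then -μ (w k.castSucc) else 0))
      = 1 - ∑ i ∈ P,
          ((Finset.univ.filter (fun k : Fin (m + 1) => w k = i)).card : ℝ) * μ i := by
  set g : Fin (m + 1) → ℝ := fun j =>
    if w j = vs then (1 : ℝ) else if w j ∈ P then -μ (w j) else 0 with hg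
  have hlast : g (Fin.last m) = 0 := by
    simp only [hg, hm]
    rw [if_neg (Ne.symm hst), if_neg htP]
  have hsum : (∑ k : Fin m, g k.castSucc) = ∑ j : Fin (m + 1), g j := by
    rw [Fin.sum_univ_castSucc, hlast, add_zero]
  have hdecomp : ∀ j : Fin (m + 1),
      g j = (if w j = vs then (1 : ℝ) else 0)
        + ∑ i ∈ P, (if w j = i then -μ i else 0) := by
    intro j
    by_cases h1 : w j = vs
    · have hz : (∑ i ∈ P, (if w j = i then -μ i else 0)) = 0 := by
        apply Finset.sum_eq_zero
        intro i hi
        rw [if_neg]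
        intro heq
        exact hsP (h1.symm.trans heq ▸ hi)
      simp only [hg, hz, add_zero, if_pos h1]
    · by_cases h2 : w j ∈ P
      · have hz : (∑ i ∈ P, (if w j = i then -μ i else 0)) = -μ (w j) := by
          rw [Finset.sum_eq_single_of_mem (w j) h2]
          · simp
          · intro i hi hne
            rw [if_neg (fun h => hne h.symm)]
        simp [hg, h1, h2, hz]
      · have hz : (∑ i ∈ P, (if w j = i then -μ i else 0)) = 0 := by
          apply Finset.sum_eq_zero
          intro i hi
          rw [if_neg]
          intro heq
          exact h2 (heq ▸ hi)
        simp [hg, h1, h2, hz]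
  calc (∑ k : Fin m, g k.castSucc) = ∑ j : Fin (m + 1), g j := hsum
    _ = (∑ j : Fin (m + 1), if w j = vs then (1 : ℝ) else 0)
        + ∑ j : Fin (m + 1), ∑ i ∈ P, (if w j = i then -μ i else 0) := by
        rw [← Finset.sum_add_distrib]
        exact Finset.sum_congr rfl fun j _ => hdecomp j
    _ = 1 - ∑ i ∈ P,
          ((Finset.univ.filter (fun k : Fin (m + 1) => w k = i)).card : ℝ) * μ i := by
        have h1 : (∑ j : Fin (m + 1), if w j = vs then (1 : ℝ) else 0) = 1 := by
          rw [← Finset.sum_filter]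
          have : (Finset.univ.filter (fun j : Fin (m + 1) => w j = vs)) = {0} := by
            ext j
            simp only [Finset.mem_filter, Finset.mem_univ, true_and, Finset.mem_singleton]
            exact ⟨hsonce j, fun h => h ▸ h0⟩
          rw [this]
          simp
        rw [h1, Finset.sum_comm]
        have h2 : ∀ i ∈ P,
            (∑ j : Fin (m + 1), if w j = i then -μ i else 0)
              = -(((Finset.univ.filter (fun k : Fin (m + 1) => w k = i)).card : ℝ) * μ i) := by
          intro i hi
          rw [← Finset.sum_filter, Finset.sum_const, nsmul_eq_mul]
          ring
        rw [Finset.sum_congr rfl h2]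
        rw [sub_eq_add_neg, ← Finset.sum_neg_distrib]
end
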